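/- Let Z be a Banach space, Y a closed subspace, and X a subspace complementary to Y (X ∩ Y = {0}) such that X ⊕ Y is closed in Z. Suppose there is a closed subspace X' of Z with X' + Y closed, X ⊆ X', and X' ∩ Y finite dimensional. Then X ⊕ (X' ∩ Y) is a closed subspace of Z. -/

import Mathlib

/-- Lemma A.5: `Z` Banach, `Y` closed, `X ∩ Y = 0` with `X ⊕ Y` closed; if `X'` is a closed
subspace with `X' + Y` closed, `X ⊆ X'` and `X' ∩ Y` finite dimensional, then
`X ⊕ (X' ∩ Y)` is closed. -/
theorem stmt_4 {𝕜 Z : Type*} [RCLike 𝕜]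
    [NormedAddCommGroup Z] [NormedSpace 𝕜 Z] [CompleteSpace Z]
    (X X' Y : Submodule 𝕜 Z)
    (hY : IsClosed (Y : Set Z)) (hX' : IsClosed (X' : Set Z))
    (hXY : X ⊓ Y = ⊥)
    (hXYcl : IsClosed ((X ⊔ Y : Submodule 𝕜 Z) : Set Z))
    (hX'Ycl : IsClosed ((X' ⊔ Y : Submodule 𝕜 Z) : Set Z))
    (hXX' : X ≤ X')
    (hfin : FiniteDimensional 𝕜 ↥(X' ⊓ Y)) :
    IsClosed ((X ⊔ (X' ⊓ Y) : Submodule 𝕜 Z) : Set Z) := by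
  have key : X ⊔ (X' ⊓ Y) = (X ⊔ Y) ⊓ X' := by
    rw [inf_comm X' Y, ← sup_inf_assoc_of_le Y hXX']
  rw [key]
  have : (((X ⊔ Y) ⊓ X' : Submodule 𝕜 Z) : Set Z) = ((X ⊔ Y : Submodule 𝕜 Z) : Set Z) ∩ X' :=
    Submodule.coe_inf
  rw [this]
  exact hXYcl.inter hX'
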